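/- Let n_1 < n_2 < n_3 < ⋯ be a strictly increasing sequence of positive integers and m_1 < m_2 < m_3 < ⋯ an infinite sequence of indices such that: (1) every positive integer divides n_i for some index i; (2) for every k, the integer n_{m_k} is divisible by n_j for all 1 ≤ j < m_k; (3) for every k and every index i with m_{k−1} ≤ i < m_k (void condition for k = 1), one has 1/n_i ≤ ∑_{i<j≤m_k} 1/n_j + 1/n_{m_k}; and (4) the strict inequality 1/n_{m_k} < ∑_{j>m_k} 1/n_j holds for infinitely many k (the right-hand side interpreted as +∞ if divergent). Then every rational number q with 0 < q < ∑_{i=1}^∞ 1/n_i is equal to ∑_{i∈S} 1/n_i for infinitely many distinct finite sets S ⊂ ℕ. -/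

import Mathlib

open scoped ENNReal


lemma nat_greedy (w : ℕ → ℕ) (M : ℕ) (hwM : w M = 1) :
    ∀ t a c, M < a + t →
      (∀ i, a ≤ i → i < M → w i ≤ (∑ j ∈ Finset.Ioc i M, w j) + 1) →
      c ≤ ∑ j ∈ Finset.Icc a M, w j →
      ∃ S ⊆ Finset.Icc a M, c = ∑ j ∈ S, w j := by
  intro t
  induction t with
  | zero =>
    intro a c h _ hc
    rw [Finset.Icc_eq_empty (by omega)] at hc ⊢
    exact ⟨∅, Finset.Subset.refl _, by simpa using hc⟩
  | succ t ih =>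
    intro a c h hcond hc
    by_cases haM : a ≤ M
    · have hsplit : Finset.Icc a M = insert a (Finset.Ioc a M) :=
        (Finset.Ioc_insert_left haM).symm
      have hnotmem : a ∉ Finset.Ioc a M := by simp
      have hsum : ∑ j ∈ Finset.Icc a M, w j = w a + ∑ j ∈ Finset.Ioc a M, w j := by
        rw [hsplit, Finset.sum_insert hnotmem]
      have hIcc : Finset.Icc (a + 1) M = Finset.Ioc a M := Finset.Icc_add_one_left_eq_Ioc a M
      by_cases hwa : w a ≤ c
      · obtain ⟨S, hS, hsum'⟩ := ih (a + 1) (c - w a) (by omega)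
          (fun i hi hi' => hcond i (by omega) hi') (by rw [hIcc]; omega)
        refine ⟨insert a S, ?_, ?_⟩
        · rw [hsplit]
          exact Finset.insert_subset_insert a (hS.trans hIcc.le)
        · have haS : a ∉ S := by
            intro hmem
            have := hS hmem
            rw [Finset.mem_Icc] at this
            omega
          rw [Finset.sum_insert haS]
          omega
      · by_cases haM' : a = M
        · subst haM'
          have : c = 0 := by omega
          exact ⟨∅, Finset.empty_subset _, by simpa using this⟩
        · have hcnd := hcond a le_rfl (by omega)
          obtain ⟨S, hS, hsum'⟩ := ih (a + 1) c (by omega)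
            (fun i hi hi' => hcond i (by omega) hi') (by rw [hIcc]; omega)
          exact ⟨S, hS.trans (by rw [hIcc]; exact Finset.Ioc_subset_Icc_self), hsum'⟩
    · rw [Finset.Icc_eq_empty (by omega)] at hc ⊢
      exact ⟨∅, Finset.Subset.refl _, by simpa using hc⟩

lemma rat_greedy (n : ℕ → ℕ) (hpos : ∀ i, 0 < n i) (M a : ℕ)
    (hdvd : ∀ j, j ≤ M → n j ∣ n M)
    (hcond : ∀ i, a ≤ i → i < M →
      (1 : ℚ) / (n i) ≤ (∑ j ∈ Finset.Ioc i M, (1 : ℚ) / (n j)) + 1 / (n M))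
    (c : ℕ) (hc : (c : ℚ) / (n M) ≤ ∑ j ∈ Finset.Icc a M, (1 : ℚ) / (n j)) :
    ∃ S ⊆ Finset.Icc a M, (c : ℚ) / (n M) = ∑ j ∈ S, (1 : ℚ) / (n j) := by
  set w : ℕ → ℕ := fun j => n M / n j with hw
  have hNpos : (0 : ℚ) < (n M : ℚ) := by exact_mod_cast hpos M
  have hNne : (n M : ℚ) ≠ 0 := ne_of_gt hNpos
  have key : ∀ j, j ≤ M → (1 : ℚ) / (n j) = (w j : ℚ) / (n M) := by
    intro j hj
    have hjne : ((n j : ℚ)) ≠ 0 := by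
      have := hpos j; positivity
    rw [hw]
    rw [Nat.cast_div (hdvd j hj) hjne]
    field_simp
  have hwM : w M = 1 := by simp [hw, Nat.div_self (hpos M)]
  -- transfer hcond
  have hcond' : ∀ i, a ≤ i → i < M → w i ≤ (∑ j ∈ Finset.Ioc i M, w j) + 1 := by
    intro i hi hi'
    have h := hcond i hi hi'
    rw [key i (le_of_lt hi')] at h
    rw [Finset.sum_congr rfl (fun j hj => key j (Finset.mem_Ioc.mp hj).2)] at h
    have hsum : ∑ j ∈ Finset.Ioc i M, ((w j : ℚ)) / (n M)
        = (((∑ j ∈ Finset.Ioc i M, w j : ℕ) : ℚ)) / (n M) := by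
      rw [← Finset.sum_div]; norm_cast
    rw [hsum] at h
    have h1 : (1 : ℚ) / (n M) = ((1 : ℕ) : ℚ) / (n M) := by norm_num
    rw [h1, ← add_div] at h
    have := (div_le_div_iff_of_pos_right hNpos).mp h
    exact_mod_cast this
  have hc' : c ≤ ∑ j ∈ Finset.Icc a M, w j := by
    rw [Finset.sum_congr rfl (fun j hj => key j (Finset.mem_Icc.mp hj).2)] at hc
    have hsum : ∑ j ∈ Finset.Icc a M, ((w j : ℚ)) / (n M)
        = (((∑ j ∈ Finset.Icc a M, w j : ℕ) : ℚ)) / (n M) := by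
      rw [← Finset.sum_div]; norm_cast
    rw [hsum] at hc
    have := (div_le_div_iff_of_pos_right hNpos).mp hc
    exact_mod_cast this
  obtain ⟨S, hS, hsum⟩ := nat_greedy w M hwM (M + 1) a c (by omega) hcond' hc'
  refine ⟨S, hS, ?_⟩
  rw [hsum]
  rw [Finset.sum_congr rfl (fun j hj => key j (Finset.mem_Icc.mp (hS hj)).2)]
  rw [← Finset.sum_div]; norm_cast


lemma lemA (n : ℕ → ℕ) (m : ℕ → ℕ) (hmm : StrictMono m)
    (h3a : ∀ i < m 0,
      (1 : ℚ) / (n i) ≤ (∑ j ∈ Finset.Ioc i (m 0), (1 : ℚ) / (n j)) + 1 / (n (m 0)))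
    (h3b : ∀ k i, m k ≤ i → i < m (k + 1) →
      (1 : ℚ) / (n i) ≤
        (∑ j ∈ Finset.Ioc i (m (k + 1)), (1 : ℚ) / (n j)) + 1 / (n (m (k + 1)))) :
    ∀ K, ∀ i, i < m K →
      (1 : ℚ) / (n i) ≤ (∑ j ∈ Finset.Ioc i (m K), (1 : ℚ) / (n j)) + 1 / (n (m K)) := by
  intro K
  induction K with
  | zero => exact h3a
  | succ K ih =>
    intro i hi
    by_cases hK : m K ≤ i
    · exact h3b K i hK hi
    · push_neg at hK
      have h1 := ih i hK
      have h2 := h3b K (m K) le_rfl (hmm (Nat.lt_succ_self K))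
      -- combine
      calc (1:ℚ)/(n i) ≤ (∑ j ∈ Finset.Ioc i (m K), (1:ℚ)/(n j)) + 1/(n (m K)) := h1
        _ ≤ (∑ j ∈ Finset.Ioc i (m K), (1:ℚ)/(n j)) +
            ((∑ j ∈ Finset.Ioc (m K) (m (K+1)), (1:ℚ)/(n j)) + 1/(n (m (K+1)))) := by
            linarith [h2]
        _ = (∑ j ∈ Finset.Ioc i (m (K+1)), (1:ℚ)/(n j)) + 1/(n (m (K+1))) := by
            rw [← add_assoc, Finset.sum_Ioc_consecutive _ (le_of_lt hK)
              (le_of_lt (hmm (Nat.lt_succ_self K)))]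


lemma enn_sum_eq (n : ℕ → ℕ) (hpos : ∀ i, 0 < n i) (F : Finset ℕ) :
    ∑ i ∈ F, ((n i : ℝ≥0∞))⁻¹ = ENNReal.ofReal ((∑ i ∈ F, (1 : ℚ) / (n i) : ℚ) : ℝ) := by
  have : ((∑ i ∈ F, (1 : ℚ) / (n i) : ℚ) : ℝ) = ∑ i ∈ F, (1 : ℝ) / (n i) := by push_cast; ring
  rw [this, ENNReal.ofReal_sum_of_nonneg (fun i _ => by positivity)]
  refine Finset.sum_congr rfl (fun i _ => ?_)
  have h : (0:ℝ) < (n i : ℝ) := by exact_mod_cast hpos i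
  rw [one_div, ENNReal.ofReal_inv_of_pos h, ENNReal.ofReal_natCast]

lemma exists_nat_div (q : ℚ) (hq : 0 ≤ q) (N : ℕ) (hN : 0 < N) (hd : (q.den : ℕ) ∣ N) :
    ∃ c : ℕ, q = (c : ℚ) / (N : ℚ) := by
  refine ⟨q.num.toNat * (N / q.den), ?_⟩
  have hnum : (q.num.toNat : ℤ) = q.num := Int.toNat_of_nonneg (Rat.num_nonneg.mpr hq)
  have hden : ((N / q.den : ℕ) : ℚ) = (N : ℚ) / (q.den : ℚ) := by
    exact Nat.cast_div hd (by exact_mod_cast q.den_pos.ne')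
  have hNne : (N : ℚ) ≠ 0 := by exact_mod_cast hN.ne'
  have hdne : ((q.den : ℚ)) ≠ 0 := by exact_mod_cast q.den_pos.ne'
  rw [eq_div_iff hNne]
  push_cast [hden]
  have h1 : ((q.num.toNat : ℚ)) = (q.num : ℚ) := by exact_mod_cast hnum
  rw [h1]
  have h2 : (q.num : ℚ) * ((N : ℚ) / (q.den : ℚ)) = ((q.num : ℚ) / (q.den : ℚ)) * N := by
    ring
  rw [h2, Rat.num_div_den]

/-- Under the hypotheses of Proposition `prop:general`
(conditions (1)–(3) as in Statement 13), if additionally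
`1 / n (m k) < ∑_{j > m k} 1 / n j` for infinitely many `k`, then every
rational `q` with `0 < q < ∑_i 1 / n_i` equals `∑_{i ∈ S} 1 / n i` for
infinitely many distinct finite sets `S ⊂ ℕ`. -/
theorem stmt14 (n : ℕ → ℕ) (hmono : StrictMono n) (hpos : ∀ i, 0 < n i)
    (m : ℕ → ℕ) (hmmono : StrictMono m)
    (h1 : ∀ d : ℕ, 0 < d → ∃ i, d ∣ n i)
    (h2 : ∀ k, ∀ j < m k, n j ∣ n (m k))
    (h3a : ∀ i < m 0,
      (1 : ℚ) / (n i) ≤ (∑ j ∈ Finset.Ioc i (m 0), (1 : ℚ) / (n j)) + 1 / (n (m 0)))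
    (h3b : ∀ k i, m k ≤ i → i < m (k + 1) →
      (1 : ℚ) / (n i) ≤
        (∑ j ∈ Finset.Ioc i (m (k + 1)), (1 : ℚ) / (n j)) + 1 / (n (m (k + 1))))
    (h4 : {k : ℕ | ((n (m k) : ℝ≥0∞))⁻¹ <
        ∑' j : ℕ, ((n (m k + 1 + j) : ℝ≥0∞))⁻¹}.Infinite) :
    ∀ q : ℚ, 0 < q → ENNReal.ofReal (q : ℝ) < ∑' i, ((n i : ℝ≥0∞))⁻¹ →
      {S : Finset ℕ | q = ∑ i ∈ S, (1 : ℚ) / (n i)}.Infinite := by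
  intro q hq0 hqlt
  have hA := lemA n m hmmono h3a h3b
  -- all divisors up to m K divide n (m K)
  have hdvd : ∀ K j, j ≤ m K → n j ∣ n (m K) := by
    intro K j hj
    rcases eq_or_lt_of_le hj with h | h
    · rw [h]
    · exact h2 K j h
  -- a helper producing a representation from a suitable bound
  have hrep : ∀ (r : ℚ) (a K : ℕ), 0 ≤ r → r.den ∣ n (m K) →
      r ≤ ∑ j ∈ Finset.Icc a (m K), (1 : ℚ) / (n j) →
      ∃ S ⊆ Finset.Icc a (m K), r = ∑ j ∈ S, (1 : ℚ) / (n j) := by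
    intro r a K hr0 hrd hrle
    obtain ⟨c, hc⟩ := exists_nat_div r hr0 (n (m K)) (hpos _) hrd
    rw [hc] at hrle ⊢
    exact rat_greedy n hpos (m K) a (hdvd K)
      (fun i hi hi' => hA K i hi') c hrle
  -- Step 1: for every N there is a representation with sup ≥ N
  have key : ∀ N, ∃ S : Finset ℕ, q = ∑ i ∈ S, (1 : ℚ) / (n i) ∧ N ≤ S.sup id := by
    intro N
    induction N with
    | zero =>
      -- initial representation
      obtain ⟨i0, hi0⟩ := h1 q.den q.den_pos
      -- partial sum exceeding q
      rw [ENNReal.tsum_eq_iSup_sum, lt_iSup_iff] at hqlt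
      obtain ⟨s, hs⟩ := hqlt
      set M0 := s.sup id + 1 with hM0
      have hsub : s ⊆ Finset.Icc 0 (m (max M0 (i0 + 1))) := by
        intro x hx
        rw [Finset.mem_Icc]
        refine ⟨Nat.zero_le _, ?_⟩
        have h1' : x ≤ s.sup id := Finset.le_sup (f := id) hx
        have h2' : M0 ≤ m (max M0 (i0+1)) :=
          le_trans (le_max_left _ _) hmmono.le_apply
        omega
      have hs2 : ENNReal.ofReal (q : ℝ) <
          ∑ i ∈ Finset.Icc 0 (m (max M0 (i0+1))), ((n i : ℝ≥0∞))⁻¹ :=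
        lt_of_lt_of_le hs (Finset.sum_le_sum_of_subset hsub)
      rw [enn_sum_eq n hpos] at hs2
      have hq' : (q : ℝ) ≤ ((∑ i ∈ Finset.Icc 0 (m (max M0 (i0+1))), (1:ℚ)/(n i) : ℚ) : ℝ) := by
        by_contra hcon
        push_neg at hcon
        exact absurd (ENNReal.ofReal_le_ofReal hcon.le) (not_le.mpr hs2)
      have hqle : q ≤ ∑ i ∈ Finset.Icc 0 (m (max M0 (i0+1))), (1:ℚ)/(n i) := by
        exact_mod_cast hq'
      have hdq : q.den ∣ n (m (max M0 (i0+1))) := by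
        refine hi0.trans (hdvd _ i0 ?_)
        have : i0 + 1 ≤ m (max M0 (i0+1)) :=
          le_trans (le_max_right _ _) hmmono.le_apply
        omega
      obtain ⟨S, _, hS⟩ := hrep q 0 (max M0 (i0+1)) hq0.le hdq hqle
      exact ⟨S, hS, Nat.zero_le _⟩
    | succ N ihN =>
      obtain ⟨S, hSq, hSsup⟩ := ihN
      have hSne : S.Nonempty := by
        rcases Finset.eq_empty_or_nonempty S with h | h
        · exfalso; rw [h] at hSq; simp at hSq; exact absurd hSq (ne_of_gt hq0)
        · exact h
      set t := S.max' hSne with ht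
      have htS : t ∈ S := S.max'_mem hSne
      have htmax : ∀ x ∈ S, x ≤ t := fun x hx => S.le_max' x hx
      have hsupt : S.sup id = t := by
        apply le_antisymm
        · exact Finset.sup_le (fun x hx => htmax x hx)
        · exact Finset.le_sup (f := id) htS
      -- pick k in the h4 set with t < k
      obtain ⟨k, hk4, hkt⟩ := h4.exists_gt t
      have htmk : t < m k := lt_of_lt_of_le hkt hmmono.le_apply
      -- extract a finite partial tail sum exceeding 1/(n (m k))
      have hk4' : ((n (m k) : ℝ≥0∞))⁻¹ < ∑' j : ℕ, ((n (m k + 1 + j) : ℝ≥0∞))⁻¹ := hk4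
      rw [ENNReal.tsum_eq_iSup_sum, lt_iSup_iff] at hk4'
      obtain ⟨s, hs⟩ := hk4'
      set M1 := m k + 1 + s.sup id with hM1
      have himg : ∑ j ∈ s, ((n (m k + 1 + j) : ℝ≥0∞))⁻¹ =
          ∑ i ∈ s.image (fun j => m k + 1 + j), ((n i : ℝ≥0∞))⁻¹ := by
        rw [Finset.sum_image (by intro a _ b _ h; simp only at h; omega)]
      have himgsub : s.image (fun j => m k + 1 + j) ⊆ Finset.Ioc (m k) M1 := by
        intro x hx
        rw [Finset.mem_image] at hx
        obtain ⟨j, hj, rfl⟩ := hx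
        rw [Finset.mem_Ioc]
        have : j ≤ s.sup id := Finset.le_sup (f := id) hj
        omega
      have hs2 : ((n (m k) : ℝ≥0∞))⁻¹ < ∑ i ∈ Finset.Ioc (m k) M1, ((n i : ℝ≥0∞))⁻¹ := by
        rw [himg] at hs
        exact lt_of_lt_of_le hs (Finset.sum_le_sum_of_subset himgsub)
      -- convert to ℚ
      have hsingle : ((n (m k) : ℝ≥0∞))⁻¹ =
          ENNReal.ofReal ((∑ i ∈ {m k}, (1:ℚ)/(n i) : ℚ) : ℝ) := by
        rw [← enn_sum_eq n hpos]; simp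
      rw [hsingle, enn_sum_eq n hpos] at hs2
      have hq' : ((∑ i ∈ ({m k} : Finset ℕ), (1:ℚ)/(n i) : ℚ) : ℝ) ≤
          ((∑ i ∈ Finset.Ioc (m k) M1, (1:ℚ)/(n i) : ℚ) : ℝ) := by
        by_contra hcon
        push_neg at hcon
        exact absurd (ENNReal.ofReal_le_ofReal hcon.le) (not_le.mpr hs2)
      have htail : (1:ℚ)/(n (m k)) ≤ ∑ i ∈ Finset.Ioc (m k) M1, (1:ℚ)/(n i) := by
        have : (∑ i ∈ ({m k} : Finset ℕ), (1:ℚ)/(n i)) ≤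
            ∑ i ∈ Finset.Ioc (m k) M1, (1:ℚ)/(n i) := by exact_mod_cast hq'
        simpa using this
      -- pick K with m K ≥ M1 and K > k
      set K := max (M1 + 1) (k + 1) with hK
      have hmKM1 : M1 ≤ m K := by
        have : M1 + 1 ≤ m K := le_trans (le_max_left _ _) hmmono.le_apply
        omega
      have hkK : m k < m K := hmmono (by omega)
      -- chain inequalities: 1 / n t ≤ ∑_{Ioc t (m K)} 1/n j
      have hchain : (1:ℚ)/(n t) ≤ ∑ j ∈ Finset.Ioc t (m K), (1:ℚ)/(n j) := by
        have e1 : (1:ℚ)/(n t) ≤ (∑ j ∈ Finset.Ioc t (m k), (1:ℚ)/(n j)) + 1/(n (m k)) :=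
          hA k t htmk
        have e2 : ∑ i ∈ Finset.Ioc (m k) M1, (1:ℚ)/(n i) ≤
            ∑ i ∈ Finset.Ioc (m k) (m K), (1:ℚ)/(n i) := by
          apply Finset.sum_le_sum_of_subset_of_nonneg
          · exact Finset.Ioc_subset_Ioc_right hmKM1
          · intro i _ _; positivity
        have e3 := Finset.sum_Ioc_consecutive (fun j => (1:ℚ)/(n j))
          (le_of_lt htmk) (le_of_lt hkK)
        linarith
      -- represent 1/(n t) over Icc (t+1) (m K)
      have hdent : ((1:ℚ)/(n t)).den ∣ n (m K) := by
        have hd1 : ((1:ℚ)/(n t)).den ∣ n t := by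
          rw [one_div, Rat.inv_natCast_den_of_pos (hpos t)]
        exact hd1.trans (hdvd K t (by omega))
      have hIccIoc : Finset.Icc (t+1) (m K) = Finset.Ioc t (m K) := Finset.Icc_add_one_left_eq_Ioc t (m K)
      have hntpos : (0:ℚ) < (n t : ℚ) := by exact_mod_cast hpos t
      have hinvpos : (0:ℚ) < 1/(n t : ℚ) := by positivity
      obtain ⟨R, hRsub, hRsum⟩ := hrep ((1:ℚ)/(n t)) (t+1) K hinvpos.le hdent
        (by rw [hIccIoc]; exact hchain)
      have hRne : R.Nonempty := by
        rcases Finset.eq_empty_or_nonempty R with h | h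
        · exfalso
          rw [h] at hRsum
          simp at hRsum
          exact absurd hRsum (hpos t).ne'
        · exact h
      -- new representation
      have hdisj : Disjoint (S.erase t) R := by
        rw [Finset.disjoint_left]
        intro x hx hxR
        have hx1 : x ∈ S := Finset.mem_of_mem_erase hx
        have hx2 : x ≠ t := Finset.ne_of_mem_erase hx
        have hx3 : x ≤ t := htmax x hx1
        have := hRsub hxR
        rw [hIccIoc, Finset.mem_Ioc] at this
        omega
      refine ⟨(S.erase t) ∪ R, ?_, ?_⟩
      · rw [Finset.sum_union hdisj, ← hRsum]
        rw [← Finset.sum_erase_add S _ htS] at hSq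
        exact hSq
      · obtain ⟨x0, hx0⟩ := hRne
        have hx0' := hRsub hx0
        rw [hIccIoc, Finset.mem_Ioc] at hx0'
        have : x0 ≤ ((S.erase t) ∪ R).sup id :=
          Finset.le_sup (f := id) (Finset.mem_union_right _ hx0)
        omega
  -- Step 2: conclude infinitude
  by_contra hfin
  rw [Set.not_infinite] at hfin
  set B := hfin.toFinset.sup (fun S => S.sup id) with hB
  obtain ⟨S, hSq, hSsup⟩ := key (B + 1)
  have hSmem : S ∈ hfin.toFinset := by
    rw [Set.Finite.mem_toFinset]; exact hSq
  have : S.sup id ≤ B := Finset.le_sup (f := fun S => S.sup id) hSmem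
  omega
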